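/- Let q be a power of an odd prime, let c ∈ F_q be nonzero (where F_q is viewed as the subfield of F_{q²} fixed by x ↦ x^q), and let S = {β ∈ F_{q²} : β^q + β = c}. Then S has exactly q elements, every β ∈ S is nonzero, and Σ_{β ∈ S} β^{q−1} = 1. -/

import Mathlib

open Polynomial Finset

lemma root_count_le {F : Type*} [Field F] [Fintype F] [DecidableEq F]
    (P : F[X]) (hP : P ≠ 0) :
    (Finset.univ.filter fun x : F => P.eval x = 0).card ≤ P.natDegree := by
  have hsub : (Finset.univ.filter fun x : F => P.eval x = 0) ⊆ P.roots.toFinset := by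
    intro x hx
    simp only [Finset.mem_filter] at hx
    simp [Multiset.mem_toFinset, Polynomial.mem_roots, hP, hx.2]
  calc (Finset.univ.filter fun x : F => P.eval x = 0).card
      ≤ P.roots.toFinset.card := Finset.card_le_card hsub
    _ ≤ Multiset.card P.roots := Multiset.toFinset_card_le _
    _ ≤ P.natDegree := Polynomial.card_roots' P

/-- Let `q` be a power of an odd prime, `F` a finite field of cardinality `q²`, and
`c ∈ F` a nonzero element of the subfield fixed by `x ↦ x^q` (i.e. `c^q = c`). Then
the set `S = {β : β^q + β = c}` has exactly `q` elements, every `β ∈ S` is nonzero,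
and `∑_{β ∈ S} β^{q-1} = 1`. -/
theorem trace_fiber_sum {F : Type*} [Field F] [Fintype F] [DecidableEq F]
    {p e q : ℕ} (hp : p.Prime) (hodd : Odd p) (he : 1 ≤ e) (hq : q = p ^ e)
    (hcard : Fintype.card F = q ^ 2)
    (c : F) (hc : c ≠ 0) (hcfix : c ^ q = c) :
    (Finset.univ.filter fun β : F => β ^ q + β = c).card = q ∧
      (∀ β ∈ Finset.univ.filter fun β : F => β ^ q + β = c, β ≠ 0) ∧
      ∑ β ∈ Finset.univ.filter (fun β : F => β ^ q + β = c), β ^ (q - 1) = 1 := by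
  have hq2 : 2 ≤ q := by
    rw [hq]
    calc 2 ≤ p := hp.two_le
    _ = p ^ 1 := (pow_one p).symm
    _ ≤ p ^ e := Nat.pow_le_pow_right hp.one_lt.le he
  have hq0 : 0 < q := by omega
  -- characteristic
  obtain ⟨r, hr⟩ := CharP.exists F
  haveI := hr
  have hrprime : r.Prime := CharP.char_is_prime F r
  obtain ⟨n, hn⟩ := FiniteField.card F r
  have hrp : r = p := by
    have h1 : p ∣ r ^ (n : ℕ) := by
      rw [← hn.2, hcard, hq]
      exact dvd_pow (dvd_pow_self p (by omega)) (by positivity)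
    exact ((Nat.prime_dvd_prime_iff_eq hp hrprime).mp (hp.dvd_of_dvd_pow h1)).symm
  haveI hcharp : CharP F p := by rwa [hrp] at hr
  haveI := Fact.mk hp
  have hfrob : ∀ a b : F, (a + b) ^ q = a ^ q + b ^ q := by
    intro a b; rw [hq]; exact add_pow_char_pow a b p e
  have hcast : (q : F) = 0 := by
    have h2 : ((q : F)) ^ 2 = 0 := by
      rw [← Nat.cast_pow, ← hcard]
      exact FiniteField.cast_card_eq_zero F
    exact pow_eq_zero_iff two_ne_zero |>.mp h2
  have hpc : ∀ a : F, a ^ q ^ 2 = a := fun a => by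
    rw [← hcard]; exact FiniteField.pow_card a
  set f : F → F := fun β => β ^ q + β with hf
  have hfadd : ∀ a b, f (a + b) = f a + f b := by
    intro a b; simp only [hf]; rw [hfrob]; ring
  set K : Finset F := univ.filter fun x => f x = 0 with hK
  set Fix : Finset F := univ.filter fun x => x ^ q = x with hFix
  -- kernel size bound
  have hKle : K.card ≤ q := by
    have hmon : ((X : F[X]) ^ q + X).Monic := by
      monicity! <;> simp [show ¬ q ≤ 1 by omega, show ¬ (1 = q) by omega, show (1:ℕ) ≤ q by omega]
    have hdeg : ((X : F[X]) ^ q + X).natDegree = q := by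
      compute_degree! <;> simp [show ¬ q ≤ 1 by omega, show ¬ (1 = q) by omega, show (1:ℕ) ≤ q by omega]
    have := root_count_le ((X : F[X]) ^ q + X) hmon.ne_zero
    rw [hdeg] at this
    refine le_trans (le_of_eq ?_) this
    congr 1; ext x; simp [hK, hf]
  have hFixle : Fix.card ≤ q := by
    have hmon : ((X : F[X]) ^ q - X).Monic := by
      monicity! <;> simp [show ¬ q ≤ 1 by omega, show ¬ (1 = q) by omega, show (1:ℕ) ≤ q by omega]
    have hdeg : ((X : F[X]) ^ q - X).natDegree = q := by
      compute_degree! <;> simp [show ¬ q ≤ 1 by omega, show ¬ (1 = q) by omega, show (1:ℕ) ≤ q by omega]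
    have := root_count_le ((X : F[X]) ^ q - X) hmon.ne_zero
    rw [hdeg] at this
    refine le_trans (le_of_eq ?_) this
    congr 1; ext x; simp [hFix, sub_eq_zero]
  -- each fiber over the image has size K.card
  have hfiber : ∀ c' ∈ univ.image f, (univ.filter fun β => f β = c').card = K.card := by
    intro c' hc'
    obtain ⟨β₀, _, hβ₀⟩ := Finset.mem_image.mp hc'
    apply Finset.card_bij (fun β _ => β - β₀)
    · intro β hβ
      simp only [mem_filter, mem_univ, true_and] at hβ
      have h1 : f (β - β₀ + β₀) = f (β - β₀) + f β₀ := hfadd _ _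
      rw [sub_add_cancel, hβ, hβ₀] at h1
      simp only [hK, mem_filter, mem_univ, true_and]
      exact right_eq_add.mp h1
    · intro a _ b _ hab; exact sub_left_injective hab
    · intro x hx
      simp only [hK, mem_filter, mem_univ, true_and] at hx
      refine ⟨x + β₀, ?_, by ring⟩
      simp only [mem_filter, mem_univ, true_and]
      rw [hfadd, hx, hβ₀, zero_add]
  -- image ⊆ Fix
  have himsub : univ.image f ⊆ Fix := by
    intro y hy
    obtain ⟨a, _, ha⟩ := Finset.mem_image.mp hy
    simp only [hFix, mem_filter, mem_univ, true_and]
    rw [← ha]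
    show (a ^ q + a) ^ q = a ^ q + a
    rw [hfrob, ← pow_mul, ← sq, hpc, add_comm]
  have himle : (univ.image f).card ≤ q := le_trans (Finset.card_le_card himsub) hFixle
  -- counting
  have hcount : q * q = (univ.image f).card * K.card := by
    have := Finset.card_eq_sum_card_image f (univ : Finset F)
    rw [Finset.card_univ, hcard, pow_two] at this
    rw [this, Finset.sum_congr rfl hfiber, Finset.sum_const, smul_eq_mul]
  have hKq : K.card = q := by
    have h1 : q * q ≤ q * K.card := by
      rw [hcount]
      exact Nat.mul_le_mul_right _ himle
    have h2 : q ≤ K.card := Nat.le_of_mul_le_mul_left h1 hq0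
    omega
  have himq : (univ.image f).card = q := by
    have h1 : q * q ≤ (univ.image f).card * q := by
      rw [hcount]; exact Nat.mul_le_mul_left _ hKle
    have h2 : q ≤ (univ.image f).card := by
      have := Nat.le_of_mul_le_mul_right h1 hq0
      omega
    omega
  have himeq : univ.image f = Fix :=
    Finset.eq_of_subset_of_card_le himsub (by omega)
  have hcmem : c ∈ univ.image f := by
    rw [himeq]; simp [hFix, hcfix]
  -- Part 1
  have part1 : (univ.filter fun β : F => β ^ q + β = c).card = q := by
    have := hfiber c hcmem
    rw [hKq] at this
    exact this
  -- Part 2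
  have part2 : ∀ β ∈ univ.filter fun β : F => β ^ q + β = c, β ≠ 0 := by
    intro β hβ hβ0
    simp only [mem_filter, mem_univ, true_and] at hβ
    rw [hβ0, zero_pow (by omega), zero_add] at hβ
    exact hc hβ.symm
  refine ⟨part1, part2, ?_⟩
  -- Part 3
  set S : Finset F := univ.filter fun β : F => β ^ q + β = c with hS
  have hterm : ∀ β ∈ S, β ^ (q - 1) = c * β⁻¹ - 1 := by
    intro β hβ
    have hβ0 : β ≠ 0 := part2 β hβ
    simp only [hS, mem_filter, mem_univ, true_and] at hβ
    have hβq : β ^ q = c - β := by linear_combination hβ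
    have h1 : β ^ q = β ^ (q - 1) * β := by
      rw [← pow_succ]; congr 1; omega
    calc β ^ (q - 1) = β ^ (q - 1) * β * β⁻¹ := (mul_inv_cancel_right₀ hβ0 _).symm
      _ = β ^ q * β⁻¹ := by rw [← h1]
      _ = (c - β) * β⁻¹ := by rw [hβq]
      _ = c * β⁻¹ - 1 := by rw [sub_mul, mul_inv_cancel₀ hβ0]
  have hsum1 : ∑ β ∈ S, β ^ (q - 1) = c * (∑ β ∈ S, β⁻¹) - (q : F) := by
    rw [Finset.sum_congr rfl hterm, Finset.sum_sub_distrib, ← Finset.mul_sum,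
      Finset.sum_const, part1]
    simp
  -- the inverse sum
  set T' : Finset F := univ.filter (fun γ : F => γ ≠ 0 ∧ γ⁻¹ ^ q + γ⁻¹ = c) with hT'
  have hST : ∑ β ∈ S, β⁻¹ = ∑ γ ∈ T', γ := by
    refine Finset.sum_nbij' (fun β => β⁻¹) (fun γ => γ⁻¹) ?_ ?_ ?_ ?_ ?_
    · intro a ha
      have ha0 : a ≠ 0 := part2 a ha
      simp only [hS, mem_filter, mem_univ, true_and] at ha
      simp only [hT', mem_filter, mem_univ, true_and]
      exact ⟨inv_ne_zero ha0, by rwa [inv_inv]⟩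
    · intro a ha
      simp only [hT', mem_filter, mem_univ, true_and] at ha
      simp only [hS, mem_filter, mem_univ, true_and]
      exact ha.2
    · intro a ha; exact inv_inv a
    · intro a ha; exact inv_inv a
    · intro a ha; rfl
  have hScard : S.card = T'.card := by
    apply Finset.card_bij (fun β _ => β⁻¹)
    · intro a ha
      have ha0 : a ≠ 0 := part2 a ha
      simp only [hS, mem_filter, mem_univ, true_and] at ha
      simp only [hT', mem_filter, mem_univ, true_and]
      exact ⟨inv_ne_zero ha0, by rwa [inv_inv]⟩
    · intro a _ b _ hab
      exact inv_injective hab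
    · intro a ha
      simp only [hT', mem_filter, mem_univ, true_and] at ha
      refine ⟨a⁻¹, ?_, inv_inv a⟩
      simp only [hS, mem_filter, mem_univ, true_and]
      exact ha.2
  have hT'card : T'.card = q := by rw [← hScard, part1]
  have h0T : (0 : F) ∉ T' := by simp [hT']
  -- the polynomial
  set P : F[X] := X ^ (q + 1) - C c⁻¹ * X ^ q - C c⁻¹ * X with hP
  have hmonP : P.Monic := by
    rw [hP]; monicity!
    all_goals simp [show q ≠ 0 by omega, show (1:ℕ) ≠ q by omega, show q ≠ 1 by omega]
  have hdegP : P.natDegree = q + 1 := by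
    rw [hP]; compute_degree!
    all_goals simp [show q ≠ 0 by omega, show (1:ℕ) ≠ q by omega, show q ≠ 1 by omega]
  have hevalP : ∀ x : F, P.eval x = x ^ (q + 1) - c⁻¹ * x ^ q - c⁻¹ * x := by
    intro x; simp [hP]
  have hroot_iff : ∀ x : F, x ≠ 0 → (P.eval x = 0 ↔ x⁻¹ ^ q + x⁻¹ = c) := by
    intro x hx
    have hxq : x ^ q ≠ 0 := pow_ne_zero _ hx
    have hxq1 : x ^ (q + 1) ≠ 0 := pow_ne_zero _ hx
    have key : ((x ^ q)⁻¹ + x⁻¹) * x ^ (q + 1) = x + x ^ q := by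
      field_simp [pow_succ]
      try ring
    have h2 : c * (x ^ (q + 1) - c⁻¹ * x ^ q - c⁻¹ * x)
        = c * x ^ (q + 1) - x ^ q - x := by
      rw [mul_sub, mul_sub, ← mul_assoc, ← mul_assoc, mul_inv_cancel₀ hc, one_mul, one_mul]
    have hB : P.eval x = 0 ↔ x + x ^ q = c * x ^ (q + 1) := by
      rw [hevalP]
      constructor
      · intro h
        rw [h, mul_zero] at h2
        linear_combination h2
      · intro h
        have h3 : c * (x ^ (q + 1) - c⁻¹ * x ^ q - c⁻¹ * x) = 0 := by
          rw [h2]; linear_combination -h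
        rcases mul_eq_zero.mp h3 with h4 | h4
        · exact absurd h4 hc
        · exact h4
    rw [hB, inv_pow]
    constructor
    · intro h
      calc (x ^ q)⁻¹ + x⁻¹
          = ((x ^ q)⁻¹ + x⁻¹) * x ^ (q + 1) * (x ^ (q + 1))⁻¹ := by
            rw [mul_inv_cancel_right₀ hxq1]
        _ = (x + x ^ q) * (x ^ (q + 1))⁻¹ := by rw [key]
        _ = c * x ^ (q + 1) * (x ^ (q + 1))⁻¹ := by rw [h]
        _ = c := by rw [mul_inv_cancel_right₀ hxq1]
    · intro h
      calc x + x ^ q = ((x ^ q)⁻¹ + x⁻¹) * x ^ (q + 1) := key.symm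
        _ = c * x ^ (q + 1) := by rw [h]
  -- roots of P
  set R : Finset F := univ.filter (fun x : F => P.eval x = 0) with hR
  have hReq : R = insert 0 T' := by
    ext x
    simp only [hR, hT', mem_filter, mem_univ, true_and, mem_insert]
    by_cases hx : x = 0
    · subst hx
      simp only [true_or, iff_true]
      rw [hevalP]
      rw [zero_pow (by omega : q + 1 ≠ 0), zero_pow (by omega : q ≠ 0)]
      ring
    · rw [hroot_iff x hx]
      simp [hx]
  have hRcard : R.card = q + 1 := by
    rw [hReq, Finset.card_insert_of_notMem h0T, hT'card]
  have hRsub : R ⊆ P.roots.toFinset := by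
    intro x hx
    simp only [hR, mem_filter] at hx
    simp [Multiset.mem_toFinset, Polynomial.mem_roots, hmonP.ne_zero, hx.2]
  have hrootsle : Multiset.card P.roots ≤ q + 1 := hdegP ▸ Polynomial.card_roots' P
  have htFle : P.roots.toFinset.card ≤ Multiset.card P.roots := Multiset.toFinset_card_le _
  have hRletF : q + 1 ≤ P.roots.toFinset.card := hRcard ▸ Finset.card_le_card hRsub
  have hrootscard : Multiset.card P.roots = q + 1 := by omega
  have hnodup : P.roots.Nodup := by
    rw [← Multiset.toFinset_card_eq_card_iff_nodup]
    omega
  have htFeq : P.roots.toFinset = R :=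
    (Finset.eq_of_subset_of_card_le hRsub (by omega)).symm
  have hsumR : ∑ x ∈ R, x = P.roots.sum := by
    rw [← htFeq, Finset.sum_eq_multiset_sum, Multiset.toFinset_val, hnodup.dedup,
      Multiset.map_id']
  have hsplit : P.Splits := by
    rw [Polynomial.splits_iff_card_roots, hrootscard, hdegP]
  have hnext : P.nextCoeff = -c⁻¹ := by
    rw [Polynomial.nextCoeff_of_natDegree_pos (by omega : 0 < P.natDegree), hdegP]
    simp only [hP, Nat.add_sub_cancel, coeff_sub, coeff_X_pow, coeff_C_mul, coeff_X]
    simp [show q ≠ q + 1 by omega, show ¬ (q = 1) by omega, show (1:ℕ) ≠ q by omega]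
  have hrootsum : P.roots.sum = c⁻¹ := by
    have := Polynomial.Splits.nextCoeff_eq_neg_sum_roots_of_monic hsplit hmonP
    rw [hnext] at this
    linear_combination this
  have hT'sum : ∑ γ ∈ T', γ = c⁻¹ := by
    have h1 : ∑ x ∈ R, x = 0 + ∑ γ ∈ T', γ := by
      rw [hReq, Finset.sum_insert h0T]
    rw [hsumR, hrootsum, zero_add] at h1
    exact h1.symm
  rw [hsum1, hST, hT'sum, hcast, mul_inv_cancel₀ hc, sub_zero]
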